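/- (Helly theorem for compact-valued increasing functions) Let Ω be a bounded open subset of ℝ² and let (K_n) be a sequence of increasing functions from [0,1] into 𝒦(Ω̄). Then there exist a subsequence (K_{n_j}) and an increasing function K: [0,1] → 𝒦(Ω̄) such that K_{n_j}(t) → K(t) in the Hausdorff metric for every t ∈ [0,1]. -/

import Mathlib

open MeasureTheory Filter Set
open scoped Classical

noncomputable section

/-- The plane `ℝ²`. -/
abbrev E2 : Type := EuclideanSpace ℝ (Fin 2)

/-- Distance from a point to a set, with the convention `dist(x, ∅) = diam Ω`. -/
def distIn (Ω : Set E2) (x : E2) (S : Set E2) : ℝ :=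
  if S = ∅ then Metric.diam Ω else Metric.infDist x S

/-- Hausdorff distance between subsets of `closure Ω`, with the conventions
`dist(x, ∅) = diam Ω` and `sup ∅ = 0`. -/
def hausDistIn (Ω K₁ K₂ : Set E2) : ℝ :=
  max (sSup ((fun x => distIn Ω x K₂) '' K₁)) (sSup ((fun x => distIn Ω x K₁) '' K₂))

/-- Convergence of a sequence of compact subsets of `closure Ω` in the Hausdorff metric. -/
def TendstoHausdorff (Ω : Set E2) (K : ℕ → Set E2) (L : Set E2) : Prop :=
  Filter.Tendsto (fun n => hausDistIn Ω (K n) L) Filter.atTop (nhds 0)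

/-- `K` has at most `m` connected components: it is the union of `m` preconnected sets. -/
def AtMostComponents (m : ℕ) (K : Set E2) : Prop :=
  ∃ C : Fin m → Set E2, (∀ i, IsPreconnected (C i)) ∧ K = ⋃ i, C i

namespace HellyAux

variable {Ω : Set E2}

lemma distIn_nonneg (Ω : Set E2) (x : E2) (S : Set E2) : 0 ≤ distIn Ω x S := by
  unfold distIn; split
  · exact Metric.diam_nonneg
  · exact Metric.infDist_nonneg

lemma distIn_of_nonempty (x : E2) {S : Set E2} (h : S.Nonempty) :
    distIn Ω x S = Metric.infDist x S := by
  unfold distIn; rw [if_neg h.ne_empty]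

lemma hausDistIn_nonneg (Ω A B : Set E2) : 0 ≤ hausDistIn Ω A B :=
  le_trans (Real.sSup_nonneg fun y hy => by
    obtain ⟨x, -, rfl⟩ := hy; exact distIn_nonneg Ω x B) (le_max_left _ _)

lemma hausDistIn_comm (Ω A B : Set E2) : hausDistIn Ω A B = hausDistIn Ω B A := max_comm _ _

lemma hausDistIn_empty_empty (Ω : Set E2) : hausDistIn Ω ∅ ∅ = 0 := by
  unfold hausDistIn
  rw [Set.image_empty, Real.sSup_empty, max_self]

lemma hausDistIn_empty_left {B : Set E2} (hB : B.Nonempty) :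
    hausDistIn Ω ∅ B = Metric.diam Ω := by
  unfold hausDistIn
  rw [Set.image_empty, Real.sSup_empty]
  have h1 : (fun x => distIn Ω x (∅ : Set E2)) '' B = {Metric.diam Ω} := by
    have : (fun x => distIn Ω x (∅ : Set E2)) = fun _ => Metric.diam Ω := by
      funext x; unfold distIn; rw [if_pos rfl]
    rw [this, Set.Nonempty.image_const hB]
  rw [h1, csSup_singleton, max_eq_right Metric.diam_nonneg]

lemma hausDistIn_empty_right {A : Set E2} (hA : A.Nonempty) :
    hausDistIn Ω A ∅ = Metric.diam Ω := by
  rw [hausDistIn_comm, hausDistIn_empty_left hA]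

lemma distIn_le_diam (hΩb : Bornology.IsBounded Ω) {y : E2} {B : Set E2}
    (hy : y ∈ closure Ω) (hB : B ⊆ closure Ω) : distIn Ω y B ≤ Metric.diam Ω := by
  rcases Set.eq_empty_or_nonempty B with rfl | ⟨b, hb⟩
  · unfold distIn; rw [if_pos rfl]
  · rw [distIn_of_nonempty _ ⟨b, hb⟩]
    calc Metric.infDist y B ≤ dist y b := Metric.infDist_le_dist_of_mem hb
      _ ≤ Metric.diam (closure Ω) := Metric.dist_le_diam_of_mem hΩb.closure hy (hB hb)
      _ = Metric.diam Ω := Metric.diam_closure _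

lemma distIn_anti (hΩb : Bornology.IsBounded Ω) {y : E2} {B B' : Set E2}
    (hy : y ∈ closure Ω) (hB' : B' ⊆ closure Ω) (hBB' : B ⊆ B') :
    distIn Ω y B' ≤ distIn Ω y B := by
  rcases Set.eq_empty_or_nonempty B with rfl | hBne
  · have : distIn Ω y (∅ : Set E2) = Metric.diam Ω := by unfold distIn; rw [if_pos rfl]
    rw [this]; exact distIn_le_diam hΩb hy hB'
  · rw [distIn_of_nonempty _ hBne, distIn_of_nonempty _ (hBne.mono hBB')]
    exact Metric.infDist_le_infDist_of_subset hBB' hBne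

lemma continuous_distIn (Ω : Set E2) (B : Set E2) : Continuous fun y => distIn Ω y B := by
  rcases Set.eq_empty_or_nonempty B with rfl | hBne
  · simpa [distIn] using continuous_const
  · have : (fun y => distIn Ω y B) = fun y => Metric.infDist y B := by
      funext y; exact distIn_of_nonempty y hBne
    rw [this]; exact Metric.continuous_infDist_pt B

lemma hausDistIn_eq_hausdorffDist (hΩb : Bornology.IsBounded Ω) {A B : Set E2}
    (hA : A.Nonempty) (hB : B.Nonempty) (hAs : A ⊆ closure Ω) (hBs : B ⊆ closure Ω) :
    hausDistIn Ω A B = Metric.hausdorffDist A B := by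
  have hAb : Bornology.IsBounded A := hΩb.closure.subset hAs
  have hBb : Bornology.IsBounded B := hΩb.closure.subset hBs
  have fin : EMetric.hausdorffEdist A B ≠ ⊤ :=
    Metric.hausdorffEdist_ne_top_of_nonempty_of_bounded hA hB hAb hBb
  have fin' : EMetric.hausdorffEdist B A ≠ ⊤ :=
    Metric.hausdorffEdist_ne_top_of_nonempty_of_bounded hB hA hBb hAb
  have h1 : ∀ x ∈ A, Metric.infDist x B ≤ Metric.hausdorffDist A B := fun x hx =>
    Metric.infDist_le_hausdorffDist_of_mem hx fin
  have h2 : ∀ x ∈ B, Metric.infDist x A ≤ Metric.hausdorffDist A B := fun x hx => by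
    rw [Metric.hausdorffDist_comm]
    exact Metric.infDist_le_hausdorffDist_of_mem hx fin'
  have e1 : (fun x => distIn Ω x B) = fun x => Metric.infDist x B := by
    funext x; exact distIn_of_nonempty x hB
  have e2 : (fun x => distIn Ω x A) = fun x => Metric.infDist x A := by
    funext x; exact distIn_of_nonempty x hA
  unfold hausDistIn
  rw [e1, e2]
  have bdd1 : BddAbove ((fun x => Metric.infDist x B) '' A) := by
    refine ⟨Metric.hausdorffDist A B, ?_⟩
    rintro y ⟨x, hx, rfl⟩; exact h1 x hx
  have bdd2 : BddAbove ((fun x => Metric.infDist x A) '' B) := by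
    refine ⟨Metric.hausdorffDist A B, ?_⟩
    rintro y ⟨x, hx, rfl⟩; exact h2 x hx
  apply le_antisymm
  · apply max_le
    · refine Real.sSup_le ?_ Metric.hausdorffDist_nonneg
      rintro y ⟨x, hx, rfl⟩; exact h1 x hx
    · refine Real.sSup_le ?_ Metric.hausdorffDist_nonneg
      rintro y ⟨x, hx, rfl⟩; exact h2 x hx
  · apply Metric.hausdorffDist_le_of_infDist
    · refine le_trans (Real.sSup_nonneg fun y hy => ?_) (le_max_left _ _)
      obtain ⟨x, -, rfl⟩ := hy; exact Metric.infDist_nonneg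
    · intro x hx
      exact le_max_of_le_left (le_csSup bdd1 (Set.mem_image_of_mem _ hx))
    · intro x hx
      exact le_max_of_le_right (le_csSup bdd2 (Set.mem_image_of_mem _ hx))

lemma tendsto_zero_iff {d : ℕ → ℝ} (hd : ∀ n, 0 ≤ d n) :
    Tendsto d atTop (nhds 0) ↔ ∀ ε > 0, ∀ᶠ n in atTop, d n < ε := by
  constructor
  · intro h ε hε
    exact h.eventually (gt_mem_nhds hε)
  · intro h
    refine tendsto_order.2 ⟨fun a ha => ?_, fun a ha => h a ha⟩
    exact Eventually.of_forall fun n => lt_of_lt_of_le ha (hd n)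

lemma subset_of_tendstoHausdorff (hΩb : Bornology.IsBounded Ω) (hdiam : 0 < Metric.diam Ω)
    {A B : ℕ → Set E2} {LA LB : Set E2}
    (hAs : ∀ n, A n ⊆ closure Ω) (hBs : ∀ n, B n ⊆ closure Ω)
    (hLAs : LA ⊆ closure Ω) (hLBs : LB ⊆ closure Ω) (hLBcl : IsClosed LB)
    (hsub : ∀ n, A n ⊆ B n)
    (hA : TendstoHausdorff Ω A LA) (hB : TendstoHausdorff Ω B LB) : LA ⊆ LB := by
  intro x hx
  have hLAne : LA.Nonempty := ⟨x, hx⟩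
  have hA' := (tendsto_zero_iff fun n => hausDistIn_nonneg Ω (A n) LA).1 hA
  have hB' := (tendsto_zero_iff fun n => hausDistIn_nonneg Ω (B n) LB).1 hB
  rcases Set.eq_empty_or_nonempty LB with rfl | hLBne
  · exfalso
    obtain ⟨n, hn1, hn2⟩ := ((hA' _ hdiam).and (hB' _ hdiam)).exists
    rcases Set.eq_empty_or_nonempty (B n) with hBe | hBne
    · have hAe : A n = ∅ := Set.eq_empty_of_subset_empty (hBe ▸ hsub n)
      rw [hAe, hausDistIn_empty_left hLAne] at hn1
      exact lt_irrefl _ hn1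
    · rw [hausDistIn_empty_right hBne] at hn2
      exact lt_irrefl _ hn2
  · have hkey : ∀ ε > 0, Metric.infDist x LB < ε := by
      intro ε hε
      have hε' : 0 < min (ε / 2) (Metric.diam Ω) := lt_min (by linarith) hdiam
      obtain ⟨n, hn1, hn2⟩ := ((hA' _ hε').and (hB' _ hε')).exists
      have hBne : (B n).Nonempty := by
        rcases Set.eq_empty_or_nonempty (B n) with hBe | h
        · exfalso
          have hAe : A n = ∅ := Set.eq_empty_of_subset_empty (hBe ▸ hsub n)
          rw [hAe, hausDistIn_empty_left hLAne] at hn1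
          exact absurd hn1 (not_lt.2 (min_le_right _ _))
        · exact h
      have hAne : (A n).Nonempty := by
        rcases Set.eq_empty_or_nonempty (A n) with hAe | h
        · exfalso
          rw [hAe, hausDistIn_empty_left hLAne] at hn1
          exact absurd hn1 (not_lt.2 (min_le_right _ _))
        · exact h
      have finB : EMetric.hausdorffEdist (B n) LB ≠ ⊤ :=
        Metric.hausdorffEdist_ne_top_of_nonempty_of_bounded hBne hLBne
          (hΩb.closure.subset (hBs n)) (hΩb.closure.subset hLBs)
      have finA : EMetric.hausdorffEdist LA (A n) ≠ ⊤ :=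
        Metric.hausdorffEdist_ne_top_of_nonempty_of_bounded hLAne hAne
          (hΩb.closure.subset hLAs) (hΩb.closure.subset (hAs n))
      have c1 : Metric.infDist x LB ≤ Metric.infDist x (B n) + Metric.hausdorffDist (B n) LB :=
        Metric.infDist_le_infDist_add_hausdorffDist finB
      have c2 : Metric.infDist x (B n) ≤ Metric.infDist x (A n) :=
        Metric.infDist_le_infDist_of_subset (hsub n) hAne
      have c3 : Metric.infDist x (A n) ≤ Metric.hausdorffDist LA (A n) :=
        Metric.infDist_le_hausdorffDist_of_mem hx finA
      have e1 : Metric.hausdorffDist LA (A n) = hausDistIn Ω (A n) LA := by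
        rw [Metric.hausdorffDist_comm,
          hausDistIn_eq_hausdorffDist hΩb hAne hLAne (hAs n) hLAs]
      have e2 : Metric.hausdorffDist (B n) LB = hausDistIn Ω (B n) LB :=
        (hausDistIn_eq_hausdorffDist hΩb hBne hLBne (hBs n) hLBs).symm
      have hm : min (ε / 2) (Metric.diam Ω) ≤ ε / 2 := min_le_left _ _
      rw [e1] at c3; rw [e2] at c1
      linarith
    have h0 : Metric.infDist x LB = 0 := by
      by_contra h
      have hpos : 0 < Metric.infDist x LB :=
        lt_of_le_of_ne Metric.infDist_nonneg (Ne.symm h)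
      exact lt_irrefl _ (hkey _ hpos)
    exact (hLBcl.mem_iff_infDist_zero hLBne).2 h0

lemma extraction_on_countable (hΩb : Bornology.IsBounded Ω) {x₀ : E2} (hx₀ : x₀ ∈ closure Ω)
    {S : Set ℝ} (hScount : S.Countable) (hSsub : S ⊆ Set.Icc (0:ℝ) 1)
    (K : ℕ → ℝ → Set E2)
    (hKc : ∀ n, ∀ t ∈ Set.Icc (0:ℝ) 1, IsCompact (K n t) ∧ K n t ⊆ closure Ω) :
    ∃ φ : ℕ → ℕ, StrictMono φ ∧ ∀ t ∈ S, ∃ C : Set E2, IsCompact C ∧ C ⊆ closure Ω ∧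
      TendstoHausdorff Ω (fun j => K (φ j) t) C := by
  rcases S.eq_empty_or_nonempty with rfl | hSne
  · exact ⟨id, strictMono_id, by simp⟩
  obtain ⟨e, rfl⟩ := hScount.exists_eq_range hSne
  have hXc : IsCompact (closure Ω) :=
    Metric.isCompact_of_isClosed_isBounded isClosed_closure hΩb.closure
  haveI : CompactSpace ↥(closure Ω) := isCompact_iff_compactSpace.1 hXc
  have hmem : ∀ i : ℕ, e i ∈ Set.Icc (0:ℝ) 1 := fun i => hSsub ⟨i, rfl⟩
  set pt : TopologicalSpace.NonemptyCompacts ↥(closure Ω) :=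
    ⟨⟨{⟨x₀, hx₀⟩}, isCompact_singleton⟩, Set.singleton_nonempty _⟩ with hpt
  set G : ℕ → ℕ → Bool × TopologicalSpace.NonemptyCompacts ↥(closure Ω) := fun n i =>
    if h : K n (e i) = ∅ then (true, pt)
    else (false,
      ⟨⟨Subtype.val ⁻¹' (K n (e i)), by
          rw [Subtype.isCompact_iff, Set.image_preimage_eq_inter_range, Subtype.range_coe,
            Set.inter_eq_self_of_subset_left (hKc n (e i) (hmem i)).2]
          exact (hKc n (e i) (hmem i)).1⟩, by
        obtain ⟨a, ha⟩ := Set.nonempty_iff_ne_empty.2 h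
        exact ⟨⟨a, (hKc n (e i) (hmem i)).2 ha⟩, ha⟩⟩) with hG
  obtain ⟨a, φ, hφ, hconv⟩ := CompactSpace.tendsto_subseq G
  refine ⟨φ, hφ, ?_⟩
  rintro t ⟨i, rfl⟩
  have hi : Tendsto (fun n => G (φ n) i) atTop (nhds (a i)) := by
    have := tendsto_pi_nhds.1 hconv i
    exact this
  have hfst : Tendsto (fun n => (G (φ n) i).1) atTop (nhds (a i).1) :=
    (continuous_fst.tendsto (a i)).comp hi
  have hsnd : Tendsto (fun n => (G (φ n) i).2) atTop (nhds (a i).2) :=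
    (continuous_snd.tendsto (a i)).comp hi
  have hfst' : ∀ᶠ n in atTop, (G (φ n) i).1 = (a i).1 := by
    rw [nhds_discrete, tendsto_pure] at hfst
    exact hfst
  rcases Bool.eq_false_or_eq_true (a i).1 with hab | hab
  · -- limit is empty
    refine ⟨∅, isCompact_empty, Set.empty_subset _, ?_⟩
    have hev : ∀ᶠ n in atTop, K (φ n) (e i) = ∅ := by
      filter_upwards [hfst'] with n hn
      by_contra hne
      rw [hG] at hn
      simp only [dif_neg hne] at hn
      rw [hab] at hn
      exact Bool.false_eq_true.mp hn
    refine Tendsto.congr' ?_ (tendsto_const_nhds (x := (0:ℝ)))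
    filter_upwards [hev] with n hn
    rw [hn, hausDistIn_empty_empty]
  · -- limit is nonempty compact
    set Ci : Set ↥(closure Ω) := ((a i).2 : Set ↥(closure Ω)) with hCi
    refine ⟨Subtype.val '' Ci, ((a i).2.isCompact).image continuous_subtype_val, ?_, ?_⟩
    · rintro y ⟨z, -, rfl⟩; exact z.2
    · have hd : Tendsto (fun n => dist ((G (φ n) i).2) ((a i).2)) atTop (nhds 0) :=
        tendsto_iff_dist_tendsto_zero.1 hsnd
      apply Tendsto.congr' _ hd
      filter_upwards [hfst'] with n hn
      have hne : K (φ n) (e i) ≠ ∅ := by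
        intro hE
        rw [hG] at hn
        simp only [dif_pos hE] at hn
        rw [hab] at hn
        exact Bool.true_eq_false.mp hn
      have h2 : ((G (φ n) i).2 : Set ↥(closure Ω)) = Subtype.val ⁻¹' (K (φ n) (e i)) := by
        rw [hG]; simp only [dif_neg hne]; rfl
      rw [Metric.NonemptyCompacts.dist_eq, h2]
      have himg : (Subtype.val : ↥(closure Ω) → E2) ''
          ((Subtype.val : ↥(closure Ω) → E2) ⁻¹' (K (φ n) (e i))) = K (φ n) (e i) := by
        rw [Set.image_preimage_eq_inter_range, Subtype.range_coe,
          Set.inter_eq_self_of_subset_left (hKc (φ n) (e i) (hmem i)).2]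
      have hiso := Metric.hausdorffDist_image
        (s := (Subtype.val : ↥(closure Ω) → E2) ⁻¹' (K (φ n) (e i))) (t := Ci)
        (isometry_subtype_coe (s := closure Ω))
      rw [← hiso, himg]
      have hKne : (K (φ n) (e i)).Nonempty := Set.nonempty_iff_ne_empty.2 hne
      have hCine : (Subtype.val '' Ci).Nonempty := ((a i).2.nonempty.image _)
      rw [hausDistIn_eq_hausdorffDist hΩb hKne hCine (hKc (φ n) (e i) (hmem i)).2
        (by rintro y ⟨z, -, rfl⟩; exact z.2)]

/-- The rationals in `[0,1]`. -/
def ratIcc : Set ℝ := Set.range ((↑) : ℚ → ℝ) ∩ Set.Icc 0 1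

lemma ratIcc_countable : ratIcc.Countable :=
  Set.Countable.mono Set.inter_subset_left (Set.countable_range _)

lemma ratIcc_subset : ratIcc ⊆ Set.Icc (0:ℝ) 1 := Set.inter_subset_right

lemma bad_level_countable (hΩb : Bornology.IsBounded Ω)
    {L₀ : ℝ → Set E2}
    (hc : ∀ q ∈ ratIcc, IsCompact (L₀ q)) (hs : ∀ q ∈ ratIcc, L₀ q ⊆ closure Ω)
    (hmono : ∀ q ∈ ratIcc, ∀ q' ∈ ratIcc, q ≤ q' → L₀ q ⊆ L₀ q')
    {ε : ℝ} (hε : 0 < ε) (hεd : ε ≤ Metric.diam Ω) :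
    Set.Countable {t : ℝ | t ∈ Set.Ioo (0:ℝ) 1 ∧
      ∀ q1 ∈ ratIcc, ∀ q2 ∈ ratIcc, q1 < t → t < q2 →
        ε ≤ hausDistIn Ω (L₀ q1) (L₀ q2)} := by
  set T := {t : ℝ | t ∈ Set.Ioo (0:ℝ) 1 ∧
      ∀ q1 ∈ ratIcc, ∀ q2 ∈ ratIcc, q1 < t → t < q2 →
        ε ≤ hausDistIn Ω (L₀ q1) (L₀ q2)} with hT
  have hratmem : ∀ (r : ℚ), 0 ≤ (r:ℝ) → (r:ℝ) ≤ 1 → (r:ℝ) ∈ ratIcc :=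
    fun r h0 h1 => ⟨⟨r, rfl⟩, h0, h1⟩
  -- Choose a separated point for each `t ∈ T`.
  have hx : ∀ t ∈ T, ∃ x : E2,
      (∀ q ∈ ratIcc, t < q → x ∈ L₀ q) ∧
      (∀ q ∈ ratIcc, q < t → ε ≤ distIn Ω x (L₀ q)) := by
    rintro t ⟨⟨ht0, ht1⟩, hbad⟩
    -- index type of admissible rational pairs
    let I := {p : ℚ × ℚ // 0 ≤ ((p.1 : ℝ)) ∧ (p.1 : ℝ) < t ∧ t < (p.2 : ℝ) ∧ (p.2 : ℝ) ≤ 1}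
    have hmemI : ∀ p : I, ((p.1.1 : ℝ)) ∈ ratIcc ∧ ((p.1.2 : ℝ)) ∈ ratIcc := by
      rintro ⟨⟨q1, q2⟩, h0, h1, h2, h3⟩
      exact ⟨hratmem q1 h0 (le_of_lt (lt_of_lt_of_le h1 (le_of_lt (lt_of_lt_of_le h2 h3)))),
        hratmem q2 (le_of_lt (lt_trans (lt_of_le_of_lt h0 h1) h2)) h3⟩
    haveI : Nonempty I := by
      obtain ⟨q1, hq10, hq1t⟩ := exists_rat_btwn ht0
      obtain ⟨q2, hq2t, hq21⟩ := exists_rat_btwn ht1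
      exact ⟨⟨(q1, q2), le_of_lt hq10, hq1t, hq2t, le_of_lt hq21⟩⟩
    set F : I → Set E2 := fun p =>
      L₀ (p.1.2 : ℝ) ∩ {y | ε ≤ distIn Ω y (L₀ (p.1.1 : ℝ))} with hF
    have hFcl : ∀ p, IsClosed (F p) := fun p =>
      ((hc _ (hmemI p).2).isClosed).inter
        (isClosed_le continuous_const (continuous_distIn Ω _))
    have hFcpt : ∀ p, IsCompact (F p) := fun p =>
      (hc _ (hmemI p).2).inter_right
        (isClosed_le continuous_const (continuous_distIn Ω _))
    have hFne : ∀ p, (F p).Nonempty := by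
      rintro p
      obtain ⟨hq1R, hq2R⟩ := hmemI p
      have hbadp := hbad _ hq1R _ hq2R p.2.2.1 p.2.2.2.1
      have hm12 : L₀ (p.1.1 : ℝ) ⊆ L₀ (p.1.2 : ℝ) :=
        hmono _ hq1R _ hq2R (le_of_lt (lt_trans p.2.2.1 p.2.2.2.1))
      rcases Set.eq_empty_or_nonempty (L₀ (p.1.2 : ℝ)) with h2e | h2ne
      · exfalso
        have h1e : L₀ (p.1.1 : ℝ) = ∅ := Set.eq_empty_of_subset_empty (h2e ▸ hm12)
        rw [h1e, h2e, hausDistIn_empty_empty] at hbadp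
        exact absurd hbadp (not_le.2 hε)
      rcases Set.eq_empty_or_nonempty (L₀ (p.1.1 : ℝ)) with h1e | h1ne
      · obtain ⟨y, hy⟩ := h2ne
        refine ⟨y, hy, ?_⟩
        show ε ≤ distIn Ω y (L₀ (p.1.1 : ℝ))
        rw [h1e]
        unfold distIn
        rw [if_pos rfl]
        exact hεd
      · -- both nonempty; the sup term over `L₀ q2` must be large
        have hterm1 : sSup ((fun x => distIn Ω x (L₀ (p.1.2:ℝ))) '' L₀ (p.1.1:ℝ)) ≤ 0 := by
          refine Real.sSup_le ?_ le_rfl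
          rintro y ⟨x, hx, rfl⟩
          dsimp only
          rw [distIn_of_nonempty _ h2ne, Metric.infDist_zero_of_mem (hm12 hx)]
        have hterm2 : ε ≤ sSup ((fun x => distIn Ω x (L₀ (p.1.1:ℝ))) '' L₀ (p.1.2:ℝ)) := by
          rcases le_max_iff.1 hbadp with h | h
          · exfalso; exact absurd (lt_of_lt_of_le hε (le_trans h hterm1)) (lt_irrefl 0)
          · exact h
        obtain ⟨y, hy, hmax⟩ := (hc _ hq2R).exists_isMaxOn h2ne
          ((continuous_distIn Ω (L₀ (p.1.1:ℝ))).continuousOn)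
        refine ⟨y, hy, ?_⟩
        have : sSup ((fun x => distIn Ω x (L₀ (p.1.1:ℝ))) '' L₀ (p.1.2:ℝ)) ≤
            distIn Ω y (L₀ (p.1.1:ℝ)) := by
          refine Real.sSup_le ?_ (distIn_nonneg Ω y _)
          rintro z ⟨x, hx, rfl⟩
          dsimp only
          exact hmax hx
        exact le_trans hterm2 this
    have hdir : Directed (· ⊇ ·) F := by
      rintro p p'
      have h0 : (0:ℝ) ≤ ((max p.1.1 p'.1.1 : ℚ) : ℝ) := by
        push_cast; exact le_max_of_le_left p.2.1
      have h1 : ((max p.1.1 p'.1.1 : ℚ) : ℝ) < t := by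
        push_cast; exact max_lt p.2.2.1 p'.2.2.1
      have h2 : t < ((min p.1.2 p'.1.2 : ℚ) : ℝ) := by
        push_cast; exact lt_min p.2.2.2.1 p'.2.2.2.1
      have h3 : ((min p.1.2 p'.1.2 : ℚ) : ℝ) ≤ 1 := by
        push_cast; exact le_trans (min_le_left _ _) p.2.2.2.2
      set r : I := ⟨(max p.1.1 p'.1.1, min p.1.2 p'.1.2), h0, h1, h2, h3⟩ with hr
      have hsub : ∀ (s : I), ((s.1.1:ℝ)) ≤ ((r.1.1:ℝ)) → ((r.1.2:ℝ)) ≤ ((s.1.2:ℝ)) →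
          F r ⊆ F s := by
        rintro s hs1 hs2 y ⟨hy2, hyd⟩
        refine ⟨hmono _ (hmemI r).2 _ (hmemI s).2 hs2 hy2, ?_⟩
        show ε ≤ distIn Ω y (L₀ (s.1.1:ℝ))
        refine le_trans hyd ?_
        exact distIn_anti hΩb (hs _ (hmemI r).2 hy2 |> fun h => h)
          (hs _ (hmemI r).1) (hmono _ (hmemI s).1 _ (hmemI r).1 hs1)
      refine ⟨r, ?_, ?_⟩
      · exact hsub p (by show (p.1.1:ℝ) ≤ ((max p.1.1 p'.1.1 : ℚ) : ℝ); push_cast; exact le_max_left _ _)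
          (by show ((min p.1.2 p'.1.2 : ℚ) : ℝ) ≤ (p.1.2:ℝ); push_cast; exact min_le_left _ _)
      · exact hsub p' (by show (p'.1.1:ℝ) ≤ ((max p.1.1 p'.1.1 : ℚ) : ℝ); push_cast; exact le_max_right _ _)
          (by show ((min p.1.2 p'.1.2 : ℚ) : ℝ) ≤ (p'.1.2:ℝ); push_cast; exact min_le_right _ _)
    obtain ⟨x, hxmem⟩ :=
      IsCompact.nonempty_iInter_of_directed_nonempty_isCompact_isClosed F hdir hFne hFcpt hFcl
    rw [Set.mem_iInter] at hxmem
    refine ⟨x, ?_, ?_⟩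
    · rintro q ⟨⟨r, rfl⟩, hq0, hq1⟩ htq
      obtain ⟨q1, hq10, hq1t⟩ := exists_rat_btwn ht0
      have := hxmem ⟨(q1, r), le_of_lt hq10, hq1t, htq, hq1⟩
      exact this.1
    · rintro q ⟨⟨r, rfl⟩, hq0, hq1⟩ hqt
      obtain ⟨q2, hq2t, hq21⟩ := exists_rat_btwn ht1
      have := hxmem ⟨(r, q2), hq0, hqt, hq2t, le_of_lt hq21⟩
      exact this.2
  choose! x hx1 hx2 using hx
  -- pairwise separation
  have hsep : ∀ s ∈ T, ∀ t ∈ T, s ≠ t → ε ≤ dist (x s) (x t) := by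
    have main : ∀ s ∈ T, ∀ t ∈ T, s < t → ε ≤ dist (x t) (x s) := by
      intro s hsT t htT hst
      obtain ⟨r, hsr, hrt⟩ := exists_rat_btwn hst
      have hrR : (r:ℝ) ∈ ratIcc :=
        ⟨⟨r, rfl⟩, le_of_lt (lt_trans hsT.1.1 hsr), le_of_lt (lt_trans hrt htT.1.2)⟩
      have hxs : x s ∈ L₀ (r:ℝ) := hx1 s hsT _ hrR hsr
      have hd : ε ≤ distIn Ω (x t) (L₀ (r:ℝ)) := hx2 t htT _ hrR hrt
      rw [distIn_of_nonempty _ ⟨_, hxs⟩] at hd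
      exact le_trans hd (Metric.infDist_le_dist_of_mem hxs)
    intro s hsT t htT hne
    rcases lt_or_gt_of_ne hne with h | h
    · rw [dist_comm]; exact main s hsT t htT h
    · exact main t htT s hsT h
  -- separated sets are countable
  obtain ⟨u, hu⟩ := TopologicalSpace.exists_dense_seq E2
  have hg : ∀ t ∈ T, ∃ n : ℕ, dist (x t) (u n) < ε / 2 := fun t _ =>
    hu.exists_dist_lt (x t) (by linarith)
  choose! g hgs using hg
  refine Set.countable_iff_exists_injOn.2 ⟨g, ?_⟩
  intro s hsT t htT hgst
  by_contra hne
  have h1 := hgs s hsT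
  have h2 := hgs t htT
  have h3 := hsep s hsT t htT hne
  have h4 : dist (x s) (x t) ≤ dist (x s) (u (g s)) + dist (u (g t)) (x t) := by
    rw [hgst]; exact dist_triangle _ _ _
  rw [dist_comm (u (g t))] at h4
  linarith

end HellyAux

theorem helly_compact_valued (Ω : Set E2) (hΩo : IsOpen Ω) (hΩb : Bornology.IsBounded Ω)
    (K : ℕ → ℝ → Set E2)
    (hKc : ∀ n, ∀ t ∈ Set.Icc (0:ℝ) 1, IsCompact (K n t) ∧ K n t ⊆ closure Ω)
    (hKmono : ∀ n, ∀ s ∈ Set.Icc (0:ℝ) 1, ∀ t ∈ Set.Icc (0:ℝ) 1, s ≤ t → K n s ⊆ K n t) :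
    ∃ (φ : ℕ → ℕ), StrictMono φ ∧
      ∃ L : ℝ → Set E2,
        (∀ t ∈ Set.Icc (0:ℝ) 1, IsCompact (L t) ∧ L t ⊆ closure Ω) ∧
        (∀ s ∈ Set.Icc (0:ℝ) 1, ∀ t ∈ Set.Icc (0:ℝ) 1, s ≤ t → L s ⊆ L t) ∧
        ∀ t ∈ Set.Icc (0:ℝ) 1, TendstoHausdorff Ω (fun j => K (φ j) t) (L t) := by
  classical
  rcases Set.eq_empty_or_nonempty Ω with rfl | hΩne
  · -- trivial case `Ω = ∅`
    refine ⟨id, strictMono_id, fun _ => (∅ : Set E2), fun t ht => ⟨isCompact_empty,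
      Set.empty_subset _⟩, fun _ _ _ _ _ => subset_rfl, fun t ht => ?_⟩
    have hKe : ∀ n, K n t = ∅ := fun n =>
      Set.eq_empty_of_subset_empty (by simpa [closure_empty] using (hKc n t ht).2)
    refine tendsto_const_nhds.congr fun n => ?_
    show (0:ℝ) = hausDistIn ∅ (K n t) ∅
    rw [hKe n]
    exact (HellyAux.hausDistIn_empty_empty _).symm
  obtain ⟨x₀, hx₀⟩ := hΩne
  have hx₀c : x₀ ∈ closure Ω := subset_closure hx₀
  -- positive diameter
  have hdiam : 0 < Metric.diam Ω := by
    obtain ⟨r, hr, hball⟩ := Metric.isOpen_iff.1 hΩo x₀ hx₀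
    set v : E2 := (r / 2) • EuclideanSpace.single (0 : Fin 2) (1 : ℝ) with hv
    have hnv : ‖v‖ = r / 2 := by
      rw [hv, norm_smul, EuclideanSpace.norm_single]
      simp [Real.norm_eq_abs, abs_of_pos hr]
    have hyΩ : x₀ + v ∈ Ω := by
      apply hball
      rw [Metric.mem_ball, dist_eq_norm, add_sub_cancel_left, hnv]
      linarith
    have hd : dist x₀ (x₀ + v) = r / 2 := by
      rw [dist_eq_norm', add_sub_cancel_left, hnv]
    have := Metric.dist_le_diam_of_mem hΩb hx₀ hyΩ
    rw [hd] at this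
    linarith
  -- first extraction : on the rationals of [0,1]
  obtain ⟨φ₁, hφ₁, hlim₁⟩ := HellyAux.extraction_on_countable hΩb hx₀c
    HellyAux.ratIcc_countable HellyAux.ratIcc_subset K hKc
  choose! L₀ hL₀c hL₀s hL₀t using hlim₁
  have hL₀mono : ∀ q ∈ HellyAux.ratIcc, ∀ q' ∈ HellyAux.ratIcc, q ≤ q' → L₀ q ⊆ L₀ q' := by
    intro q hq q' hq' hle
    exact HellyAux.subset_of_tendstoHausdorff hΩb hdiam
      (fun n => (hKc (φ₁ n) q (HellyAux.ratIcc_subset hq)).2)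
      (fun n => (hKc (φ₁ n) q' (HellyAux.ratIcc_subset hq')).2)
      (hL₀s q hq) (hL₀s q' hq') (hL₀c q' hq').isClosed
      (fun n => hKmono (φ₁ n) q (HellyAux.ratIcc_subset hq) q'
        (HellyAux.ratIcc_subset hq') hle)
      (hL₀t q hq) (hL₀t q' hq')
  -- bad points
  set Bad : Set ℝ := {t : ℝ | t ∈ Set.Ioo (0:ℝ) 1 ∧
    ¬ ∀ ε > 0, ∃ q1 ∈ HellyAux.ratIcc, ∃ q2 ∈ HellyAux.ratIcc,
      q1 < t ∧ t < q2 ∧ hausDistIn Ω (L₀ q1) (L₀ q2) < ε} with hBadDef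
  have hBadc : Bad.Countable := by
    have hsubU : Bad ⊆ ⋃ k : ℕ, {t : ℝ | t ∈ Set.Ioo (0:ℝ) 1 ∧
        ∀ q1 ∈ HellyAux.ratIcc, ∀ q2 ∈ HellyAux.ratIcc, q1 < t → t < q2 →
          min (1 / (k + 1 : ℝ)) (Metric.diam Ω) ≤ hausDistIn Ω (L₀ q1) (L₀ q2)} := by
      rintro t ⟨htI, hbad⟩
      push_neg at hbad
      obtain ⟨ε, hε, hbad⟩ := hbad
      obtain ⟨k, hk⟩ := exists_nat_one_div_lt hε
      refine Set.mem_iUnion.2 ⟨k, htI, ?_⟩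
      intro q1 hq1 q2 hq2 h1 h2
      have := hbad q1 hq1 q2 hq2 h1 h2
      calc min (1 / (k + 1 : ℝ)) (Metric.diam Ω) ≤ 1 / (k + 1 : ℝ) := min_le_left _ _
        _ ≤ ε := le_of_lt hk
        _ ≤ hausDistIn Ω (L₀ q1) (L₀ q2) := this
    refine Set.Countable.mono hsubU (Set.countable_iUnion fun k => ?_)
    exact HellyAux.bad_level_countable hΩb hL₀c hL₀s hL₀mono
      (lt_min (by positivity) hdiam) (min_le_right _ _)
  -- second extraction : on the rationals together with the bad points
  have hSc : (HellyAux.ratIcc ∪ Bad).Countable := HellyAux.ratIcc_countable.union hBadc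
  have hSsub : HellyAux.ratIcc ∪ Bad ⊆ Set.Icc (0:ℝ) 1 :=
    Set.union_subset HellyAux.ratIcc_subset (fun t ht => Set.Ioo_subset_Icc_self ht.1)
  obtain ⟨ψ, hψ, hlim₂⟩ := HellyAux.extraction_on_countable hΩb hx₀c hSc hSsub
    (fun n => K (φ₁ n)) (fun n => hKc (φ₁ n))
  -- convergence on the rationals persists along the subsequence
  have hconvD : ∀ q ∈ HellyAux.ratIcc,
      TendstoHausdorff Ω (fun j => K (φ₁ (ψ j)) q) (L₀ q) := fun q hq =>
    (hL₀t q hq).comp hψ.tendsto_atTop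
  -- existence of a limit at every point of [0,1]
  have key : ∀ t ∈ Set.Icc (0:ℝ) 1, ∃ C : Set E2, IsCompact C ∧ C ⊆ closure Ω ∧
      TendstoHausdorff Ω (fun j => K (φ₁ (ψ j)) t) C := by
    intro t ht
    by_cases htS : t ∈ HellyAux.ratIcc ∪ Bad
    · exact hlim₂ t htS
    · have htD : t ∉ HellyAux.ratIcc := fun h => htS (Or.inl h)
      have htI : t ∈ Set.Ioo (0:ℝ) 1 := by
        constructor
        · rcases lt_or_eq_of_le ht.1 with h | h
          · exact h
          · exact absurd (h ▸ (⟨⟨0, by norm_num⟩, le_refl (0:ℝ), by norm_num⟩ :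
              (0:ℝ) ∈ HellyAux.ratIcc)) htD
        · rcases lt_or_eq_of_le ht.2 with h | h
          · exact h
          · exact absurd ((h.symm ▸ (⟨⟨1, by norm_num⟩, by norm_num, le_refl (1:ℝ)⟩ :
              (1:ℝ) ∈ HellyAux.ratIcc)) : t ∈ HellyAux.ratIcc) htD
      have hgood : ∀ ε > 0, ∃ q1 ∈ HellyAux.ratIcc, ∃ q2 ∈ HellyAux.ratIcc,
          q1 < t ∧ t < q2 ∧ hausDistIn Ω (L₀ q1) (L₀ q2) < ε := by
        by_contra h
        exact htS (Or.inr ⟨htI, h⟩)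
      have h1R : (1:ℝ) ∈ HellyAux.ratIcc := ⟨⟨1, by norm_num⟩, by norm_num, le_refl (1:ℝ)⟩
      set C : Set E2 := ⋂ (q : ℝ) (_ : q ∈ HellyAux.ratIcc ∧ t < q), L₀ q with hCdef
      have hCsub1 : C ⊆ L₀ 1 := Set.iInter₂_subset (1:ℝ) ⟨h1R, htI.2⟩
      have hCcl : IsClosed C :=
        isClosed_iInter fun q => isClosed_iInter fun hq => (hL₀c q hq.1).isClosed
      have hCc : IsCompact C := (hL₀c 1 h1R).of_isClosed_subset hCcl hCsub1
      have hCs : C ⊆ closure Ω := hCsub1.trans (hL₀s 1 h1R)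
      refine ⟨C, hCc, hCs, ?_⟩
      refine (HellyAux.tendsto_zero_iff fun n => HellyAux.hausDistIn_nonneg _ _ _).2 ?_
      intro δ hδ
      set ε := min (δ / 3) (Metric.diam Ω / 2) with hεdef
      have hε : 0 < ε := lt_min (by linarith) (by linarith)
      have hεδ : ε ≤ δ / 3 := min_le_left _ _
      have hεd : ε ≤ Metric.diam Ω / 2 := min_le_right _ _
      obtain ⟨q1, hq1R, q2, hq2R, hlt1, hlt2, hd12⟩ := hgood ε hε
      have hq1I := HellyAux.ratIcc_subset hq1R
      have hq2I := HellyAux.ratIcc_subset hq2R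
      have hmono12 : L₀ q1 ⊆ L₀ q2 := hL₀mono q1 hq1R q2 hq2R (le_of_lt (hlt1.trans hlt2))
      have hev1 := (HellyAux.tendsto_zero_iff fun n =>
        HellyAux.hausDistIn_nonneg _ _ _).1 (hconvD q1 hq1R) ε hε
      have hev2 := (HellyAux.tendsto_zero_iff fun n =>
        HellyAux.hausDistIn_nonneg _ _ _).1 (hconvD q2 hq2R) ε hε
      rcases Set.eq_empty_or_nonempty (L₀ q2) with h2e | h2ne
      · -- the limit is empty beyond `t`, so everything is eventually empty
        have hCe : C = ∅ :=
          Set.eq_empty_of_subset_empty ((Set.iInter₂_subset q2 ⟨hq2R, hlt2⟩).trans h2e.subset)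
        filter_upwards [hev2] with j hj
        have hKe : K (φ₁ (ψ j)) q2 = ∅ := by
          by_contra hne
          rw [h2e, HellyAux.hausDistIn_empty_right (Set.nonempty_iff_ne_empty.2 hne)] at hj
          have : ε ≤ Metric.diam Ω := le_trans hεd (by linarith)
          exact absurd hj (not_lt.2 this)
        have hKte : K (φ₁ (ψ j)) t = ∅ :=
          Set.eq_empty_of_subset_empty
            (hKe ▸ hKmono (φ₁ (ψ j)) t ht q2 hq2I (le_of_lt hlt2))
        rw [hKte, hCe, HellyAux.hausDistIn_empty_empty]
        exact hδ
      · have h1ne : (L₀ q1).Nonempty := by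
          rcases Set.eq_empty_or_nonempty (L₀ q1) with h1e | h
          · exfalso
            rw [h1e, HellyAux.hausDistIn_empty_left h2ne] at hd12
            have : ε ≤ Metric.diam Ω := le_trans hεd (by linarith)
            exact absurd hd12 (not_lt.2 this)
          · exact h
        have hq1C : L₀ q1 ⊆ C := Set.subset_iInter₂ fun q hq =>
          hL₀mono q1 hq1R q hq.1 (le_of_lt (hlt1.trans hq.2))
        have hCq2 : C ⊆ L₀ q2 := Set.iInter₂_subset q2 ⟨hq2R, hlt2⟩
        have hCne : C.Nonempty := h1ne.mono hq1C
        filter_upwards [hev1, hev2] with j h1 h2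
        have hKq1ne : (K (φ₁ (ψ j)) q1).Nonempty := by
          rcases Set.eq_empty_or_nonempty (K (φ₁ (ψ j)) q1) with he | h
          · exfalso
            rw [he, HellyAux.hausDistIn_empty_left h1ne] at h1
            have : ε ≤ Metric.diam Ω := le_trans hεd (by linarith)
            exact absurd h1 (not_lt.2 this)
          · exact h
        have hKtq1 : K (φ₁ (ψ j)) q1 ⊆ K (φ₁ (ψ j)) t :=
          hKmono (φ₁ (ψ j)) q1 hq1I t ht (le_of_lt hlt1)
        have hKtq2 : K (φ₁ (ψ j)) t ⊆ K (φ₁ (ψ j)) q2 :=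
          hKmono (φ₁ (ψ j)) t ht q2 hq2I (le_of_lt hlt2)
        have hKtne : (K (φ₁ (ψ j)) t).Nonempty := hKq1ne.mono hKtq1
        have hKq2ne : (K (φ₁ (ψ j)) q2).Nonempty := hKtne.mono hKtq2
        have hKq1s : K (φ₁ (ψ j)) q1 ⊆ closure Ω := (hKc _ q1 hq1I).2
        have hKq2s : K (φ₁ (ψ j)) q2 ⊆ closure Ω := (hKc _ q2 hq2I).2
        have hKts : K (φ₁ (ψ j)) t ⊆ closure Ω := (hKc _ t ht).2
        have hL1s := hL₀s q1 hq1R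
        have hL2s := hL₀s q2 hq2R
        -- translate everything to `hausdorffDist`
        rw [HellyAux.hausDistIn_eq_hausdorffDist hΩb hKq1ne h1ne hKq1s hL1s] at h1
        rw [HellyAux.hausDistIn_eq_hausdorffDist hΩb hKq2ne h2ne hKq2s hL2s] at h2
        rw [HellyAux.hausDistIn_eq_hausdorffDist hΩb h1ne h2ne hL1s hL2s] at hd12
        rw [HellyAux.hausDistIn_eq_hausdorffDist hΩb hKtne hCne hKts hCs]
        have hbd : Bornology.IsBounded (closure Ω) := hΩb.closure
        have fin21 : EMetric.hausdorffEdist (L₀ q2) (L₀ q1) ≠ ⊤ :=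
          Metric.hausdorffEdist_ne_top_of_nonempty_of_bounded h2ne h1ne
            (hbd.subset hL2s) (hbd.subset hL1s)
        have finK2 : EMetric.hausdorffEdist (K (φ₁ (ψ j)) q2) (L₀ q2) ≠ ⊤ :=
          Metric.hausdorffEdist_ne_top_of_nonempty_of_bounded hKq2ne h2ne
            (hbd.subset hKq2s) (hbd.subset hL2s)
        have fin1K : EMetric.hausdorffEdist (L₀ q1) (K (φ₁ (ψ j)) q1) ≠ ⊤ :=
          Metric.hausdorffEdist_ne_top_of_nonempty_of_bounded h1ne hKq1ne
            (hbd.subset hL1s) (hbd.subset hKq1s)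
        have Ha : ∀ x ∈ K (φ₁ (ψ j)) t, Metric.infDist x C ≤ ε + ε := by
          intro x hx
          have c1 : Metric.infDist x C ≤ Metric.infDist x (L₀ q1) :=
            Metric.infDist_le_infDist_of_subset hq1C h1ne
          have c2 : Metric.infDist x (L₀ q1) ≤
              Metric.infDist x (L₀ q2) + Metric.hausdorffDist (L₀ q2) (L₀ q1) :=
            Metric.infDist_le_infDist_add_hausdorffDist fin21
          have c3 : Metric.infDist x (L₀ q2) ≤
              Metric.hausdorffDist (K (φ₁ (ψ j)) q2) (L₀ q2) :=
            Metric.infDist_le_hausdorffDist_of_mem (hKtq2 hx) finK2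
          have c4 : Metric.hausdorffDist (L₀ q2) (L₀ q1) < ε := by
            rw [Metric.hausdorffDist_comm]; exact hd12
          linarith
        have Hb : ∀ y ∈ C, Metric.infDist y (K (φ₁ (ψ j)) t) ≤ ε + ε := by
          intro y hy
          have c1 : Metric.infDist y (K (φ₁ (ψ j)) t) ≤
              Metric.infDist y (K (φ₁ (ψ j)) q1) :=
            Metric.infDist_le_infDist_of_subset hKtq1 hKq1ne
          have c2 : Metric.infDist y (K (φ₁ (ψ j)) q1) ≤
              Metric.infDist y (L₀ q1) + Metric.hausdorffDist (L₀ q1) (K (φ₁ (ψ j)) q1) :=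
            Metric.infDist_le_infDist_add_hausdorffDist fin1K
          have c3 : Metric.infDist y (L₀ q1) ≤ Metric.hausdorffDist (L₀ q2) (L₀ q1) :=
            Metric.infDist_le_hausdorffDist_of_mem (hCq2 hy) fin21
          have c4 : Metric.hausdorffDist (L₀ q2) (L₀ q1) < ε := by
            rw [Metric.hausdorffDist_comm]; exact hd12
          have c5 : Metric.hausdorffDist (L₀ q1) (K (φ₁ (ψ j)) q1) < ε := by
            rw [Metric.hausdorffDist_comm]; exact h1
          linarith
        have hfinal : Metric.hausdorffDist (K (φ₁ (ψ j)) t) C ≤ ε + ε :=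
          Metric.hausdorffDist_le_of_infDist (by linarith) Ha Hb
        linarith
  choose! L hL1 hL2 hL3 using key
  refine ⟨φ₁ ∘ ψ, hφ₁.comp hψ, L, fun t ht => ⟨hL1 t ht, hL2 t ht⟩, ?_, fun t ht => hL3 t ht⟩
  intro s hs t ht hst
  exact HellyAux.subset_of_tendstoHausdorff hΩb hdiam
    (fun j => (hKc (φ₁ (ψ j)) s hs).2) (fun j => (hKc (φ₁ (ψ j)) t ht).2)
    (hL2 s hs) (hL2 t ht) (hL1 t ht).isClosed
    (fun j => hKmono (φ₁ (ψ j)) s hs t ht hst) (hL3 s hs) (hL3 t ht)
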